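/- arXiv:2409.05654 — 6 statements merged into one kernel-verified Lean document; each statement's English description precedes it below -/
import Mathlib

section
/- Let X be a nonnegative random variable, let U be uniformly distributed on [0, 1] and independent of X, and let α > 0. Then P(αX ≥ U) = E[min(αX, 1)] ≤ α·E[X] (Randomized Markov's inequality). -/
open MeasureTheory ProbabilityTheory ENNReal

/-- Randomized Markov's inequality: if `X ≥ 0`, `U` is uniform on `[0,1]` and
independent of `X`, and `α > 0`, then `P(αX ≥ U) = E[min(αX, 1)] ≤ α·E[X]`. -/
theorem randomized_markov_inequality
    {Ω : Type*} [MeasurableSpace Ω] (P : Measure Ω) [IsProbabilityMeasure P]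
    (X U : Ω → ℝ) (hX : Measurable X) (hU : Measurable U)
    (hXnn : ∀ ω, 0 ≤ X ω)
    (hUnif : Measure.map U P = (volume : Measure ℝ).restrict (Set.Icc 0 1))
    (hindep : IndepFun X U P) (α : ℝ) (hα : 0 < α) :
    P {ω | U ω ≤ α * X ω} = ∫⁻ ω, min (ENNReal.ofReal (α * X ω)) 1 ∂P ∧
      ∫⁻ ω, min (ENNReal.ofReal (α * X ω)) 1 ∂P
        ≤ ENNReal.ofReal α * ∫⁻ ω, ENNReal.ofReal (X ω) ∂P := by
  have key : ∀ x : ℝ, (volume : Measure ℝ).restrict (Set.Icc 0 1) (Set.Iic (α * x))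
      = min (ENNReal.ofReal (α * x)) 1 := by
    intro x
    rw [Measure.restrict_apply measurableSet_Iic]
    rcases le_or_gt 0 (α * x) with h | h
    · have hset : Set.Iic (α * x) ∩ Set.Icc 0 1 = Set.Icc 0 (min (α * x) 1) := by
        ext u
        simp only [Set.mem_inter_iff, Set.mem_Iic, Set.mem_Icc, le_min_iff]
        tauto
      rw [hset, Real.volume_Icc]
      rw [show min (α * x) 1 - 0 = min (α * x) 1 by ring]
      rw [← ENNReal.ofReal_one]
      exact (Monotone.map_min fun a b hab => ENNReal.ofReal_le_ofReal hab)
    · have hset : Set.Iic (α * x) ∩ Set.Icc 0 1 = (∅ : Set ℝ) := by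
        ext u
        simp only [Set.mem_inter_iff, Set.mem_Iic, Set.mem_Icc, Set.mem_empty_iff_false,
          iff_false]
        intro ⟨h1, h2, h3⟩; linarith
      rw [hset]
      simp [ENNReal.ofReal_eq_zero.mpr h.le]
  have hmeas : Measurable fun ω => (X ω, U ω) := hX.prodMk hU
  have hmap : Measure.map (fun ω => (X ω, U ω)) P
      = (Measure.map X P).prod (Measure.map U P) :=
    (indepFun_iff_map_prod_eq_prod_map_map hX.aemeasurable hU.aemeasurable).mp hindep
  have hs : MeasurableSet {p : ℝ × ℝ | p.2 ≤ α * p.1} :=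
    measurableSet_le measurable_snd (measurable_const.mul measurable_fst)
  constructor
  · calc P {ω | U ω ≤ α * X ω}
        = Measure.map (fun ω => (X ω, U ω)) P {p : ℝ × ℝ | p.2 ≤ α * p.1} := by
          rw [Measure.map_apply hmeas hs]; rfl
      _ = (Measure.map X P).prod (Measure.map U P) {p : ℝ × ℝ | p.2 ≤ α * p.1} := by
          rw [hmap]
      _ = ∫⁻ x, Measure.map U P (Prod.mk x ⁻¹' {p : ℝ × ℝ | p.2 ≤ α * p.1}) ∂(Measure.map X P) :=
          Measure.prod_apply hs
      _ = ∫⁻ x, min (ENNReal.ofReal (α * x)) 1 ∂(Measure.map X P) := by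
          congr 1
          ext x
          have : Prod.mk x ⁻¹' {p : ℝ × ℝ | p.2 ≤ α * p.1} = Set.Iic (α * x) := rfl
          rw [this, hUnif, key x]
      _ = ∫⁻ ω, min (ENNReal.ofReal (α * X ω)) 1 ∂P := by
          exact lintegral_map (f := fun x => min (ENNReal.ofReal (α * x)) 1)
            (by fun_prop) hX
  · calc ∫⁻ ω, min (ENNReal.ofReal (α * X ω)) 1 ∂P
        ≤ ∫⁻ ω, ENNReal.ofReal (α * X ω) ∂P := lintegral_mono fun ω => min_le_left _ _
      _ = ENNReal.ofReal α * ∫⁻ ω, ENNReal.ofReal (X ω) ∂P := by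
          simp_rw [ENNReal.ofReal_mul hα.le]
          exact lintegral_const_mul' _ _ ENNReal.ofReal_ne_top
end

section
/- Let P be a probability measure on Ω and let ε¹, ε² be nonnegative random variables such that E_P[ε² | ε¹] ≤ 1 P-almost surely and E_P[ε¹] ≤ 1. Then E_P[ε¹·ε²] ≤ 1. In particular, if this holds for every P in a hypothesis H, and ε¹ is a valid level-α₁ continuous test and ε² a valid level-α₂ continuous test for H, then the product ε¹·ε² is a valid level-α₁α₂ continuous test for H. -/
open MeasureTheory ENNReal

/-- Product of mean-independent valid continuous tests: if for every `P ∈ H` the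
conditional expectation of `ε₂` given `ε₁` is at most `1` and `E_P[ε₁] ≤ 1`, then
`E_P[ε₁·ε₂] ≤ 1` for every `P ∈ H`; in particular, if `ε₁` is a valid level-`α₁`
continuous test and `ε₂` a valid level-`α₂` continuous test for `H`, the product
`ε₁·ε₂` is a valid level-`α₁α₂` continuous test for `H`. -/
theorem product_of_mean_independent_tests_is_valid
    {Ω : Type*} [MeasurableSpace Ω] (H : Set (Measure Ω))
    (hH : ∀ P ∈ H, IsProbabilityMeasure P)
    (α₁ α₂ : ℝ) (hα₁ : 0 < α₁) (hα₂ : 0 < α₂)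
    (ε₁ ε₂ : Ω → ℝ) (h1m : Measurable ε₁) (h2m : Measurable ε₂)
    (h1b : ∀ ω, ε₁ ω ∈ Set.Icc 0 (1 / α₁)) (h2b : ∀ ω, ε₂ ω ∈ Set.Icc 0 (1 / α₂))
    (hcond : ∀ P ∈ H,
      P[ε₂|MeasurableSpace.comap ε₁ (inferInstance : MeasurableSpace ℝ)]
        ≤ᵐ[P] fun _ => (1 : ℝ))
    (h1val : ∀ P ∈ H, ∫ ω, ε₁ ω ∂P ≤ 1) :
    (∀ ω, ε₁ ω * ε₂ ω ∈ Set.Icc 0 (1 / (α₁ * α₂))) ∧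
      ∀ P ∈ H, ∫ ω, ε₁ ω * ε₂ ω ∂P ≤ 1 := by
  constructor
  · intro ω
    obtain ⟨h10, h11⟩ := h1b ω
    obtain ⟨h20, h21⟩ := h2b ω
    constructor
    · exact mul_nonneg h10 h20
    · rw [one_div, mul_inv]
      calc ε₁ ω * ε₂ ω ≤ (1/α₁) * (1/α₂) := mul_le_mul h11 h21 h20 (by positivity)
        _ = α₁⁻¹ * α₂⁻¹ := by rw [one_div, one_div]
  · intro P hP
    haveI := hH P hP
    set m := MeasurableSpace.comap ε₁ (inferInstance : MeasurableSpace ℝ) with hm_def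
    have hm := hm_def ▸ h1m.comap_le
    have h1sm : StronglyMeasurable[m] ε₁ :=
      (Measurable.of_comap_le le_rfl).stronglyMeasurable
    have h2int : Integrable ε₂ P := by
      refine ⟨h2m.aestronglyMeasurable, ?_⟩
      refine HasFiniteIntegral.of_bounded (C := 1/α₂) (ae_of_all _ fun ω => ?_)
      obtain ⟨h20, h21⟩ := h2b ω
      simpa [Real.norm_eq_abs, abs_of_nonneg h20] using h21
    have h1int : Integrable ε₁ P := by
      refine ⟨h1m.aestronglyMeasurable, ?_⟩
      refine HasFiniteIntegral.of_bounded (C := 1/α₁) (ae_of_all _ fun ω => ?_)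
      obtain ⟨h10, h11⟩ := h1b ω
      simpa [Real.norm_eq_abs, abs_of_nonneg h10] using h11
    have hpint : Integrable (ε₁ * ε₂) P := by
      refine ⟨(h1m.mul h2m).aestronglyMeasurable, ?_⟩
      refine HasFiniteIntegral.of_bounded (C := (1/α₁) * (1/α₂)) (ae_of_all _ fun ω => ?_)
      obtain ⟨h10, h11⟩ := h1b ω
      obtain ⟨h20, h21⟩ := h2b ω
      simp only [Pi.mul_apply, Real.norm_eq_abs, abs_of_nonneg (mul_nonneg h10 h20)]
      exact mul_le_mul h11 h21 h20 (by positivity)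
    have hkey : P[ε₁ * ε₂|m] =ᵐ[P] ε₁ * P[ε₂|m] :=
      condExp_mul_of_stronglyMeasurable_left h1sm hpint h2int
    have hceint : Integrable (ε₁ * P[ε₂|m]) P :=
      (integrable_condExp (f := ε₁ * ε₂)).congr hkey
    calc ∫ ω, ε₁ ω * ε₂ ω ∂P = ∫ ω, (ε₁ * ε₂) ω ∂P := rfl
      _ = ∫ ω, (P[ε₁ * ε₂|m]) ω ∂P := (integral_condExp (μ := P) (f := ε₁ * ε₂) hm).symm
      _ = ∫ ω, (ε₁ * P[ε₂|m]) ω ∂P := integral_congr_ae hkey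
      _ ≤ ∫ ω, ε₁ ω ∂P := by
          refine integral_mono_ae hceint h1int ?_
          filter_upwards [hcond P hP] with ω hω
          simpa using mul_le_of_le_one_right (h1b ω).1 hω
      _ ≤ 1 := h1val P hP
end

section
/- Let P, Q be probability measures on Ω with densities p, q with respect to H̄ = (P + Q)/2, let α ≥ 0, let U be a utility function, and for λ ≥ 0 set ε^λ(ω) = min((U')⁻¹(λ·p(ω)/q(ω)), 1/α), with conventions x/0 = ∞ for x > 0 and 0/0 = 0. If L := sup_{x > 0} x·U'(x) < ∞, then for every λ ≥ L one has E_P[ε^λ] ≤ L/λ ≤ 1; in particular there exists a finite λ ≥ 0 for which ε^λ satisfies the validity condition E_P[ε^λ] ≤ 1. -/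
open MeasureTheory ENNReal NNReal Set

/-- A utility function `U : [0, 1/α] → [0, ∞]` with derivative `U' = D`:
`U 0 = 0`, `U` is non-decreasing, concave and continuous on `[0, 1/α]`, finite
and differentiable (in real coordinates) on the interior, and its derivative `D`
is continuous, strictly decreasing, with `U'(0) = ∞` and `U'(∞) = 0`. -/
structure IsUtility (α : ℝ≥0∞) (U D : ℝ≥0∞ → ℝ≥0∞) : Prop where
  map_zero : U 0 = 0
  monotoneOn : MonotoneOn U (Icc 0 α⁻¹)
  concaveOn : ∀ x ∈ Icc (0 : ℝ≥0∞) α⁻¹, ∀ y ∈ Icc (0 : ℝ≥0∞) α⁻¹,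
    ∀ t : ℝ≥0∞, t ≤ 1 → t * U x + (1 - t) * U y ≤ U (t * x + (1 - t) * y)
  continuousOn : ContinuousOn U (Icc 0 α⁻¹)
  finite_of_lt : ∀ x : ℝ≥0∞, x < α⁻¹ → U x ≠ ∞
  deriv_finite : ∀ x : ℝ≥0∞, 0 < x → x < α⁻¹ → D x ≠ ∞
  hasDerivAt : ∀ x : ℝ, 0 < x → ENNReal.ofReal x < α⁻¹ →
    HasDerivAt (fun t : ℝ => (U (ENNReal.ofReal t)).toReal)
      ((D (ENNReal.ofReal x)).toReal) x
  deriv_continuousOn : ContinuousOn D (Icc 0 α⁻¹)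
  deriv_strictAntiOn : StrictAntiOn D (Icc 0 α⁻¹)
  deriv_zero : D 0 = ∞
  deriv_top : D ∞ = 0

/-- If `L := sup_{x > 0} x·U'(x) < ∞`, then for every `λ ≥ L` the test
`ε^λ = min((U')⁻¹(λ·p/q), 1/α)` satisfies `E_P[ε^λ] ≤ L/λ ≤ 1`; in particular
there exists a finite `λ ≥ 0` for which `ε^λ` is valid, i.e. `E_P[ε^λ] ≤ 1`. -/
theorem exists_valid_lambda_of_bounded_xUx
    {Ω : Type*} [MeasurableSpace Ω]
    (P Q : Measure Ω) [IsProbabilityMeasure P] [IsProbabilityMeasure Q]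
    (p q : Ω → ℝ≥0∞) (hp : Measurable p) (hq : Measurable q)
    (hPd : P = ((2 : ℝ≥0∞)⁻¹ • (P + Q)).withDensity p)
    (hQd : Q = ((2 : ℝ≥0∞)⁻¹ • (P + Q)).withDensity q)
    (α : ℝ≥0∞) (U D Dinv : ℝ≥0∞ → ℝ≥0∞) (hU : IsUtility α U D)
    (hDinv_anti : Antitone Dinv) (hDinv_zero : Dinv 0 = ∞) (hDinv_top : Dinv ∞ = 0)
    (hDinv_inv : ∀ x ∈ Icc (0 : ℝ≥0∞) α⁻¹, 0 < D x → D x ≠ ∞ → Dinv (D x) = x)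
    (L : ℝ≥0∞) (hL : L = ⨆ x ∈ Ioc (0 : ℝ≥0∞) α⁻¹, x * D x) (hLfin : L ≠ ∞) :
    (∀ lam : ℝ≥0, L ≤ (lam : ℝ≥0∞) →
      ∫⁻ ω, min (Dinv ((lam : ℝ≥0∞) * (p ω / q ω))) α⁻¹ ∂P ≤ L / lam ∧
        L / (lam : ℝ≥0∞) ≤ 1) ∧
    ∃ lam : ℝ≥0, ∫⁻ ω, min (Dinv ((lam : ℝ≥0∞) * (p ω / q ω))) α⁻¹ ∂P ≤ 1 := by
  set ν : Measure Ω := (2 : ℝ≥0∞)⁻¹ • (P + Q) with hν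
  -- the key part: the statement for each lam ≥ L
  have main : ∀ lam : ℝ≥0, L ≤ (lam : ℝ≥0∞) →
      ∫⁻ ω, min (Dinv ((lam : ℝ≥0∞) * (p ω / q ω))) α⁻¹ ∂P ≤ L / lam ∧
        L / (lam : ℝ≥0∞) ≤ 1 := by
    intro lam hlam
    rcases eq_or_ne α⁻¹ 0 with hα | hα
    · -- trivial case: α⁻¹ = 0, integrand is 0 and L = 0
      have hL0 : L = 0 := by
        rw [hL, hα]
        simp
      have h0 : ∀ x : ℝ≥0∞, min x α⁻¹ = 0 :=
        fun x => le_antisymm (hα ▸ min_le_right x α⁻¹) (zero_le)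
      constructor
      · simp [h0, hL0]
      · simp [hL0]
    · -- now α⁻¹ > 0, hence L > 0
      have hαpos : 0 < α⁻¹ := pos_iff_ne_zero.mpr hα
      have hLpos : 0 < L := by
        obtain ⟨x, y, hx0, hxy, hyα⟩ : ∃ x y : ℝ≥0∞, 0 < x ∧ x < y ∧ y ≤ α⁻¹ := by
          rcases eq_or_ne α⁻¹ ∞ with h | h
          · exact ⟨1, 2, one_pos, one_lt_two, h ▸ le_top⟩
          · exact ⟨α⁻¹ / 2, α⁻¹, ENNReal.half_pos hα,
              ENNReal.half_lt_self hα h, le_rfl⟩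
        have hxmem : x ∈ Icc (0 : ℝ≥0∞) α⁻¹ := ⟨zero_le, (hxy.le.trans hyα)⟩
        have hymem : y ∈ Icc (0 : ℝ≥0∞) α⁻¹ := ⟨zero_le, hyα⟩
        have hDx : 0 < D x :=
          lt_of_le_of_lt (zero_le) (hU.deriv_strictAntiOn hxmem hymem hxy)
        have hxD : (0 : ℝ≥0∞) < x * D x := by
          exact ENNReal.mul_pos hx0.ne' hDx.ne'
        refine hxD.trans_le ?_
        rw [hL]
        exact le_biSup (fun y => y * D y) (show x ∈ Ioc (0:ℝ≥0∞) α⁻¹ from ⟨hx0, hxy.le.trans hyα⟩)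
      have hlam0 : (lam : ℝ≥0∞) ≠ 0 := (hLpos.trans_le hlam).ne'
      have hlamtop : (lam : ℝ≥0∞) ≠ ∞ := coe_ne_top
      -- key claim: for finite positive r, min (Dinv r) α⁻¹ * r ≤ L
      have claim : ∀ r : ℝ≥0∞, 0 < r → r ≠ ∞ → min (Dinv r) α⁻¹ * r ≤ L := by
        intro r hr0 hrtop
        set m : ℝ≥0∞ := min (Dinv r) α⁻¹ with hm
        rcases eq_or_ne m 0 with hm0 | hm0
        · simp [hm0]
        have hmpos : 0 < m := pos_iff_ne_zero.mpr hm0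
        refine le_of_forall_lt fun c hc => ?_
        have hcr : c / r < m := by
          rw [ENNReal.div_lt_iff (Or.inl hr0.ne') (Or.inl hrtop)]
          exact hc
        obtain ⟨x, hx1, hx2⟩ := exists_between hcr
        have hx0 : 0 < x := lt_of_le_of_lt (zero_le) hx1
        have hxα : x < α⁻¹ := lt_of_lt_of_le hx2 (min_le_right _ _)
        have hxmem : x ∈ Icc (0 : ℝ≥0∞) α⁻¹ := ⟨zero_le, hxα.le⟩
        have hxL : x * r ≤ L := by
          rcases le_or_gt r (D x) with h | h
          · calc x * r ≤ x * D x := mul_le_mul_right h x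
              _ ≤ L := by rw [hL]; exact le_biSup (fun y => y * D y) (show x ∈ Ioc (0:ℝ≥0∞) α⁻¹ from ⟨hx0, hxα.le⟩)
          · exfalso
            have hmmem : m ∈ Icc (0 : ℝ≥0∞) α⁻¹ := ⟨zero_le, min_le_right _ _⟩
            have hDx0 : 0 < D x :=
              lt_of_le_of_lt (zero_le) (hU.deriv_strictAntiOn hxmem hmmem hx2)
            have hDxtop : D x ≠ ∞ := hU.deriv_finite x hx0 hxα
            have : Dinv r ≤ x := by
              rw [← hDinv_inv x hxmem hDx0 hDxtop]
              exact hDinv_anti h.le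
            exact absurd (le_trans (min_le_left _ _) this) (not_le.mpr hx2)
        calc c < x * r := by
              rwa [← ENNReal.div_lt_iff (Or.inl hr0.ne') (Or.inl hrtop)]
          _ ≤ L := hxL
      -- pointwise bound
      have pointwise : ∀ ω, p ω * min (Dinv ((lam : ℝ≥0∞) * (p ω / q ω))) α⁻¹ ≤
          (L / lam) * q ω := by
        intro ω
        set a := p ω with ha
        set b := q ω with hb
        rcases eq_or_ne a 0 with ha0 | ha0
        · simp [ha0]
        rcases eq_or_ne b 0 with hb0 | hb0
        · have : a / b = ∞ := by rw [hb0]; exact ENNReal.div_zero ha0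
          rw [this, ENNReal.mul_top hlam0, hDinv_top]
          simp
        rcases eq_or_ne b ∞ with hbtop | hbtop
        · have hRHS : (L / lam) * b = ∞ := by
            rw [hbtop, ENNReal.mul_top]
            exact fun h => (ENNReal.div_eq_zero_iff.mp h).elim
              (fun h' => hLpos.ne' h') (fun h' => hlamtop h')
          rw [hRHS]; exact le_top
        rcases eq_or_ne a ∞ with hatop | hatop
        · have : a / b = ∞ := by
            rw [hatop]; exact ENNReal.top_div_of_ne_top hbtop
          rw [this, ENNReal.mul_top hlam0, hDinv_top]
          simp
        -- main case : 0 < a < ∞, 0 < b < ∞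
        set r : ℝ≥0∞ := (lam : ℝ≥0∞) * (a / b) with hr
        have hr0 : 0 < r := by
          refine ENNReal.mul_pos hlam0 ?_
          simp [ENNReal.div_eq_zero_iff, ha0, hbtop]
        have hrtop : r ≠ ∞ := by
          refine ENNReal.mul_ne_top hlamtop ?_
          simp [ENNReal.div_eq_top, ha0, hb0, hatop, hbtop]
        have key := claim r hr0 hrtop
        set m : ℝ≥0∞ := min (Dinv r) α⁻¹ with hm
        have step1 : m * r * b ≤ L * b := mul_le_mul_left key b
        have : m * r * b = m * (lam : ℝ≥0∞) * a := by
          rw [hr, mul_assoc, mul_assoc, ENNReal.div_mul_cancel hb0 hbtop, ← mul_assoc]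
        rw [this] at step1
        have step2 : m * (lam : ℝ≥0∞) * a / lam ≤ L * b / lam :=
          ENNReal.div_le_div_right step1 _
        have hleft : m * (lam : ℝ≥0∞) * a / lam = a * m := by
          rw [mul_right_comm, mul_div_assoc, ENNReal.div_self hlam0 hlamtop,
            mul_one, mul_comm]
        have hright : L * b / lam = (L / lam) * b := by
          rw [div_eq_mul_inv, div_eq_mul_inv, mul_right_comm]
        rw [hleft, hright] at step2
        exact step2
      -- measurability of the integrand
      have hf : Measurable fun ω => min (Dinv ((lam : ℝ≥0∞) * (p ω / q ω))) α⁻¹ :=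
        (hDinv_anti.measurable.comp (measurable_const.mul (hp.div hq))).min
          measurable_const
      constructor
      · have hq1 : ∫⁻ ω, q ω ∂ν = 1 := by
          have : Q Set.univ = 1 := measure_univ
          rw [hQd, withDensity_apply _ MeasurableSet.univ, setLIntegral_univ] at this
          exact this
        calc ∫⁻ ω, min (Dinv ((lam : ℝ≥0∞) * (p ω / q ω))) α⁻¹ ∂P
            = ∫⁻ ω, (p * fun ω => min (Dinv ((lam : ℝ≥0∞) * (p ω / q ω))) α⁻¹) ω ∂ν := by
              conv_lhs => rw [hPd]
              rw [lintegral_withDensity_eq_lintegral_mul _ hp hf]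
          _ ≤ ∫⁻ ω, (L / lam) * q ω ∂ν := lintegral_mono fun ω => pointwise ω
          _ = (L / lam) * ∫⁻ ω, q ω ∂ν := lintegral_const_mul _ hq
          _ = L / lam := by rw [hq1, mul_one]
      · exact ENNReal.div_le_of_le_mul (by rwa [one_mul])
  refine ⟨main, ⟨L.toNNReal, ?_⟩⟩
  have hle : L ≤ (L.toNNReal : ℝ≥0∞) := (coe_toNNReal hLfin).symm.le
  exact le_trans (main L.toNNReal hle).1 (main L.toNNReal hle).2
end

section
/- Let Ω be a measurable space, H an arbitrary (possibly composite) set of probability measures on Ω, Q a probability measure on Ω, and 0 < α ≤ 1. Let E_α denote the set of measurable ε : Ω → [0, 1/α] with E_P[ε] ≤ 1 for every P ∈ H. Then there exists ε* ∈ E_α such that E_Q[ε*] ≥ E_Q[ε] for every ε ∈ E_α; that is, a level-α valid Neyman–Pearson-optimal (randomized) test of H against the simple alternative Q exists. -/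
open MeasureTheory ENNReal NNReal Set Filter Topology

private lemma np_para (a b : ℝ≥0∞) (ha : a ≠ ⊤) (hb : b ≠ ⊤) :
    ((a ⊔ b) - (a ⊓ b))^2 + (a + b)^2 = 2*a^2 + 2*b^2 := by
  lift a to ℝ≥0 using ha; lift b to ℝ≥0 using hb
  rcases le_total a b with h | h
  · rw [sup_eq_right.2 (by exact_mod_cast h), inf_eq_left.2 (by exact_mod_cast h),
      ← ENNReal.coe_sub]
    norm_cast
    apply NNReal.coe_injective
    push_cast [NNReal.coe_sub h]
    ring
  · rw [sup_eq_left.2 (by exact_mod_cast h), inf_eq_right.2 (by exact_mod_cast h),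
      ← ENNReal.coe_sub]
    norm_cast
    apply NNReal.coe_injective
    push_cast [NNReal.coe_sub h]
    ring

private lemma np_cs {Ω : Type*} [MeasurableSpace Ω] (Q : Measure Ω) [IsProbabilityMeasure Q]
    {f : Ω → ℝ≥0∞} (hf : Measurable f) :
    ∫⁻ ω, f ω ∂Q ≤ (∫⁻ ω, (f ω)^2 ∂Q) ^ ((1:ℝ)/2) := by
  have hc : Real.HolderConjugate 2 2 := Real.holderConjugate_iff.mpr ⟨by norm_num, by norm_num⟩
  have h := ENNReal.lintegral_mul_le_Lp_mul_Lq Q hc hf.aemeasurable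
    (aemeasurable_const (b := (1:ℝ≥0∞)))
  simp only [Pi.mul_apply, mul_one, ENNReal.one_rpow, lintegral_one, measure_univ] at h
  have he : ∫⁻ a, f a ^ (2:ℝ) ∂Q = ∫⁻ ω, (f ω)^2 ∂Q := by
    refine lintegral_congr fun ω => ?_
    rw [show (2:ℝ) = ((2:ℕ):ℝ) by norm_num, ENNReal.rpow_natCast]
  rwa [he] at h

private lemma np_para_int {Ω : Type*} [MeasurableSpace Ω] (Q : Measure Ω) {a b : Ω → ℝ≥0∞}
    (ha : Measurable a) (hb : Measurable b) (ha' : ∀ ω, a ω ≠ ⊤) (hb' : ∀ ω, b ω ≠ ⊤) :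
    ∫⁻ ω, ((a ω ⊔ b ω) - (a ω ⊓ b ω))^2 ∂Q + ∫⁻ ω, (a ω + b ω)^2 ∂Q
      = 2 * ∫⁻ ω, (a ω)^2 ∂Q + 2 * ∫⁻ ω, (b ω)^2 ∂Q := by
  rw [← lintegral_const_mul 2 (ha.pow_const 2), ← lintegral_const_mul 2 (hb.pow_const 2),
    ← lintegral_add_left (f := fun ω => ((a ω ⊔ b ω) - (a ω ⊓ b ω))^2) (((ha.sup hb).sub (ha.inf hb)).pow_const 2),
    ← lintegral_add_left (f := fun ω => 2 * (a ω)^2) ((measurable_const.mul (ha.pow_const 2)))]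
  exact lintegral_congr fun ω => np_para _ _ (ha' ω) (hb' ω)

private def npRec (f : ℕ → ℕ) : ℕ → ℕ
  | 0 => f 0
  | k+1 => max (npRec f k + 1) (f (k+1))

private lemma npRec_le (f : ℕ → ℕ) (k : ℕ) : f k ≤ npRec f k := by
  cases k with
  | zero => simp [npRec]
  | succ k => exact le_max_right _ _

private lemma npRec_strictMono (f : ℕ → ℕ) : StrictMono (npRec f) :=
  strictMono_nat_of_lt_succ fun k =>
    lt_of_lt_of_le (Nat.lt_succ_self _) (le_max_left _ _)

/-- A level-`α` valid Neyman–Pearson-optimal (randomized/continuous) test of an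
arbitrary (possibly composite) hypothesis `H` against a simple alternative `Q`
exists: there is a measurable `ε* : Ω → [0, 1/α]` with `E_P[ε*] ≤ 1` for every
`P ∈ H`, such that `E_Q[ε*] ≥ E_Q[ε]` for every such test `ε`. -/
theorem exists_neyman_pearson_optimal_test
    {Ω : Type*} [MeasurableSpace Ω]
    (H : Set (Measure Ω)) (hH : ∀ P ∈ H, IsProbabilityMeasure P)
    (Q : Measure Ω) [IsProbabilityMeasure Q]
    (α : ℝ≥0∞) (hα0 : 0 < α) (hα1 : α ≤ 1) :
    ∃ εs : Ω → ℝ≥0∞, Measurable εs ∧ (∀ ω, εs ω ≤ α⁻¹) ∧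
      (∀ P ∈ H, ∫⁻ ω, εs ω ∂P ≤ 1) ∧
      ∀ ε : Ω → ℝ≥0∞, Measurable ε → (∀ ω, ε ω ≤ α⁻¹) →
        (∀ P ∈ H, ∫⁻ ω, ε ω ∂P ≤ 1) →
        ∫⁻ ω, ε ω ∂Q ≤ ∫⁻ ω, εs ω ∂Q := by
  classical
  set Iv : ℝ≥0∞ := α⁻¹ with hIdef
  have hItop : Iv ≠ ⊤ := by
    rw [hIdef, ENNReal.inv_ne_top]; exact hα0.ne'
  have hI1 : (1:ℝ≥0∞) ≤ Iv := ENNReal.one_le_inv.mpr hα1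
  set Feas : (Ω → ℝ≥0∞) → Prop := fun ε =>
    Measurable ε ∧ (∀ ω, ε ω ≤ Iv) ∧ ∀ P ∈ H, ∫⁻ ω, ε ω ∂P ≤ 1 with hFeasdef
  have hFeas1 : Feas (fun _ => 1) := by
    refine ⟨measurable_const, fun ω => hI1, fun P hP => ?_⟩
    haveI := hH P hP
    simp
  -- the optimal value
  set D : ℝ≥0∞ := ⨆ (ε : Ω → ℝ≥0∞) (_ : Feas ε), ∫⁻ ω, ε ω ∂Q with hDdef
  have hle_D : ∀ ε, Feas ε → ∫⁻ ω, ε ω ∂Q ≤ D := by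
    intro ε hε
    rw [hDdef]
    exact le_iSup_of_le ε (le_iSup_of_le hε le_rfl)
  have hDub : ∀ ε, Feas ε → ∫⁻ ω, ε ω ∂Q ≤ Iv := by
    intro ε hε
    calc ∫⁻ ω, ε ω ∂Q ≤ ∫⁻ _, Iv ∂Q := lintegral_mono fun ω => hε.2.1 ω
    _ = Iv := by simp
  have hDle : D ≤ Iv := by
    rw [hDdef]; exact iSup_le fun ε => iSup_le fun hε => hDub ε hε
  have hDtop : D ≠ ⊤ := (lt_of_le_of_lt hDle hItop.lt_top).ne
  have hD1 : (1:ℝ≥0∞) ≤ D := by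
    have : ∫⁻ _, (1:ℝ≥0∞) ∂Q = 1 := by simp
    calc (1:ℝ≥0∞) = ∫⁻ _, (1:ℝ≥0∞) ∂Q := this.symm
    _ ≤ D := hle_D _ hFeas1
  have hD0 : D ≠ 0 := fun h => by simp [h] at hD1
  -- quadratic functional
  set q : (Ω → ℝ≥0∞) → ℝ≥0∞ := fun ε => ∫⁻ ω, (ε ω)^2 ∂Q with hqdef
  have hqle : ∀ ε, Feas ε → q ε ≤ Iv^2 := by
    intro ε hε
    calc q ε ≤ ∫⁻ _, Iv^2 ∂Q := lintegral_mono fun ω => pow_le_pow_left' (hε.2.1 ω) 2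
    _ = Iv^2 := by simp
  have hI2top : Iv^2 ≠ ⊤ := ENNReal.pow_ne_top hItop
  have hqtop : ∀ ε, Feas ε → q ε ≠ ⊤ := fun ε hε => ((hqle ε hε).trans_lt hI2top.lt_top).ne
  -- slack
  set c : ℕ → ℝ≥0∞ := fun ν => ((ν:ℝ≥0∞)+1)⁻¹ with hcdef
  have hcanti : ∀ {ν ν' : ℕ}, ν ≤ ν' → c ν' ≤ c ν := by
    intro ν ν' h
    exact ENNReal.inv_le_inv.mpr (add_le_add_left (by exact_mod_cast h) 1)
  -- slices and their inf of the quadratic functional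
  set Sset : ℕ → Set ℝ := fun ν =>
    {x | ∃ ε, Feas ε ∧ D - c ν ≤ ∫⁻ ω, ε ω ∂Q ∧ x = (q ε).toReal} with hSsetdef
  have hSne : ∀ ν, (Sset ν).Nonempty := by
    intro ν
    have hc0 : c ν ≠ 0 := by simp [hcdef]
    have hlt : D - c ν < D := ENNReal.sub_lt_self hDtop hD0 hc0
    rw [hDdef, lt_iSup_iff] at hlt
    obtain ⟨ε, hε⟩ := hlt
    rw [← hDdef] at hε
    by_cases hF : Feas ε
    · rw [iSup_pos hF] at hε
      exact ⟨(q ε).toReal, ε, hF, le_of_lt hε, rfl⟩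
    · rw [iSup_neg hF] at hε
      exact absurd hε (by simp)
  have hSbdd : ∀ ν, BddBelow (Sset ν) := by
    intro ν
    exact ⟨0, fun x hx => by obtain ⟨ε, _, _, rfl⟩ := hx; exact ENNReal.toReal_nonneg⟩
  have hSub : ∀ ν x, x ∈ Sset ν → x ≤ (Iv^2).toReal := by
    rintro ν x ⟨ε, hε, _, rfl⟩
    exact ENNReal.toReal_mono hI2top (hqle ε hε)
  set d : ℕ → ℝ := fun ν => sInf (Sset ν) with hddef
  have hSsub : ∀ {ν ν' : ℕ}, ν ≤ ν' → Sset ν' ⊆ Sset ν := by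
    rintro ν ν' h x ⟨ε, hε, hεQ, rfl⟩
    exact ⟨ε, hε, le_trans (tsub_le_tsub_left (hcanti h) D) hεQ, rfl⟩
  have hdmono : Monotone d := fun ν ν' h =>
    csInf_le_csInf (hSbdd ν) (hSne ν') (hSsub h)
  have hdub : ∀ ν, d ν ≤ (Iv^2).toReal := by
    intro ν
    obtain ⟨x, hx⟩ := hSne ν
    exact le_trans (csInf_le (hSbdd ν) hx) (hSub ν x hx)
  -- limit of d
  set L : ℝ := ⨆ ν, d ν with hLdef
  have hRbdd : BddAbove (range d) := ⟨(Iv^2).toReal, by rintro x ⟨ν, rfl⟩; exact hdub ν⟩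
  have hdL : ∀ ν, d ν ≤ L := fun ν => le_ciSup hRbdd ν
  -- lower bound function for d
  have hdlb : ∀ ν ε, Feas ε → D - c ν ≤ ∫⁻ ω, ε ω ∂Q → d ν ≤ (q ε).toReal :=
    fun ν ε h1 h2 => csInf_le (hSbdd ν) ⟨ε, h1, h2, rfl⟩
  -- the geometric slack
  set e : ℕ → ℝ := fun k => (1/16:ℝ)^k with hedef
  have he0 : ∀ k, 0 < e k := fun k => pow_pos (by norm_num) k
  have heanti : ∀ k, e (k+1) ≤ e k := fun k =>
    pow_le_pow_of_le_one (by norm_num) (by norm_num) (Nat.le_succ k)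
  -- indices where d is close to L
  have hN : ∀ k, ∃ ν, L - e k < d ν := by
    intro k
    exact exists_lt_of_lt_ciSup (by linarith [he0 k] : L - e k < L)
  choose N hNlt using hN
  -- near-minimizers of q in each slice
  have hη : ∀ ν : ℕ, ∃ ε, Feas ε ∧ D - c ν ≤ ∫⁻ ω, ε ω ∂Q ∧
      (q ε).toReal < d ν + ((ν:ℝ)+1)⁻¹ := by
    intro ν
    have hpos : (0:ℝ) < ((ν:ℝ)+1)⁻¹ := by positivity
    have : sInf (Sset ν) < d ν + ((ν:ℝ)+1)⁻¹ := lt_add_of_pos_right _ hpos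
    obtain ⟨x, hx, hlt⟩ := (csInf_lt_iff (hSbdd ν) (hSne ν)).1 this
    obtain ⟨ε, hε, hεQ, rfl⟩ := hx
    exact ⟨ε, hε, hεQ, hlt⟩
  choose η hη1 hη2 hη3 using hη
  -- index sequence
  set n : ℕ → ℕ := npRec (fun j => max (N j) (16^j)) with hndef
  have hnN : ∀ k, N k ≤ n k := fun k =>
    le_trans (le_max_left _ _) (npRec_le (fun j => max (N j) (16^j)) k)
  have hn16 : ∀ k, 16^k ≤ n k := fun k =>
    le_trans (le_max_right _ _) (npRec_le (fun j => max (N j) (16^j)) k)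
  have hnsm : StrictMono n := npRec_strictMono _
  set g : ℕ → Ω → ℝ≥0∞ := fun k => η (n k) with hgdef
  have hgF : ∀ k, Feas (g k) := fun k => hη1 (n k)
  have hgQ : ∀ k, D - c (n k) ≤ ∫⁻ ω, g k ω ∂Q := fun k => hη2 (n k)
  have hgfin : ∀ k ω, g k ω ≠ ⊤ := fun k ω => ((hgF k).2.1 ω).trans_lt hItop.lt_top |>.ne
  -- u bound
  have hu : ∀ k, (((n k):ℝ)+1)⁻¹ ≤ e k := by
    intro k
    rw [hedef]
    have h1 : (16:ℝ)^k ≤ (n k : ℝ) + 1 := by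
      have := hn16 k
      have : ((16:ℕ)^k : ℝ) ≤ (n k : ℝ) := by exact_mod_cast this
      push_cast at this ⊢
      linarith
    have h2 : (0:ℝ) < (16:ℝ)^k := by positivity
    simp only [one_div, inv_pow]
    exact inv_anti₀ (by positivity) h1
  -- successive differences
  set Δ : ℕ → Ω → ℝ≥0∞ := fun k ω => (g k ω ⊔ g (k+1) ω) - (g k ω ⊓ g (k+1) ω) with hΔdef
  have hΔmeas : ∀ k, Measurable (Δ k) := fun k =>
    ((hgF k).1.sup (hgF (k+1)).1).sub ((hgF k).1.inf (hgF (k+1)).1)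
  have hΔle : ∀ k ω, Δ k ω ≤ Iv := fun k ω =>
    tsub_le_self.trans (sup_le ((hgF k).2.1 ω) ((hgF (k+1)).2.1 ω))
  -- the key quadratic estimate
  have hΔ2 : ∀ k, ∫⁻ ω, (Δ k ω)^2 ∂Q ≤ ENNReal.ofReal (6 * e k) := by
    intro k
    set mid : Ω → ℝ≥0∞ := fun ω => 2⁻¹ * g k ω + 2⁻¹ * g (k+1) ω with hmiddef
    have hmidmeas : Measurable mid :=
      (measurable_const.mul (hgF k).1).add (measurable_const.mul (hgF (k+1)).1)
    have hmidle : ∀ ω, mid ω ≤ Iv := by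
      intro ω
      calc mid ω ≤ 2⁻¹ * Iv + 2⁻¹ * Iv :=
        (add_le_add (mul_le_mul_right ((hgF k).2.1 ω) _) (mul_le_mul_right ((hgF (k+1)).2.1 ω) _))
      _ = (2⁻¹ + 2⁻¹) * Iv := (add_mul _ _ _).symm
      _ = Iv := by rw [ENNReal.inv_two_add_inv_two, one_mul]
    have hmidint : ∀ (P : Measure Ω),
        ∫⁻ ω, mid ω ∂P = 2⁻¹ * ∫⁻ ω, g k ω ∂P + 2⁻¹ * ∫⁻ ω, g (k+1) ω ∂P := by
      intro P
      rw [hmiddef]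
      rw [lintegral_add_left (f := fun ω => 2⁻¹ * g k ω) (measurable_const.mul (hgF k).1),
        lintegral_const_mul _ (hgF k).1, lintegral_const_mul _ (hgF (k+1)).1]
    have hmidF : Feas mid := by
      refine ⟨hmidmeas, hmidle, fun P hP => ?_⟩
      rw [hmidint P]
      calc 2⁻¹ * ∫⁻ ω, g k ω ∂P + 2⁻¹ * ∫⁻ ω, g (k+1) ω ∂P ≤ 2⁻¹ * 1 + 2⁻¹ * 1 :=
        (add_le_add (mul_le_mul_right ((hgF k).2.2 P hP) _) (mul_le_mul_right ((hgF (k+1)).2.2 P hP) _))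
      _ = 1 := by rw [mul_one, ENNReal.inv_two_add_inv_two]
    have hmidQ : D - c (n k) ≤ ∫⁻ ω, mid ω ∂Q := by
      rw [hmidint Q]
      have hb' : D - c (n k) ≤ ∫⁻ ω, g (k+1) ω ∂Q :=
        le_trans (tsub_le_tsub_left (hcanti (hnsm.monotone (Nat.le_succ k))) D) (hgQ (k+1))
      calc D - c (n k) = (2⁻¹ + 2⁻¹) * (D - c (n k)) := by
            rw [ENNReal.inv_two_add_inv_two, one_mul]
      _ = 2⁻¹ * (D - c (n k)) + 2⁻¹ * (D - c (n k)) := add_mul _ _ _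
      _ ≤ _ := add_le_add (mul_le_mul_right (hgQ k) _) (mul_le_mul_right hb' _)
    have hmidlb : d (n k) ≤ (q mid).toReal := hdlb _ mid hmidF hmidQ
    -- parallelogram
    have hpar : ∫⁻ ω, (Δ k ω)^2 ∂Q + ∫⁻ ω, (g k ω + g (k+1) ω)^2 ∂Q
        = 2 * q (g k) + 2 * q (g (k+1)) :=
      np_para_int Q (hgF k).1 (hgF (k+1)).1 (hgfin k) (hgfin (k+1))
    have hmid4 : ∫⁻ ω, (g k ω + g (k+1) ω)^2 ∂Q = 4 * q mid := by
      rw [hqdef]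
      rw [← lintegral_const_mul 4 (hmidmeas.pow_const 2)]
      refine lintegral_congr fun ω => ?_
      show (g k ω + g (k+1) ω)^2 = 4 * (mid ω)^2
      rw [hmiddef]
      show (g k ω + g (k+1) ω)^2 = 4 * (2⁻¹ * g k ω + 2⁻¹ * g (k+1) ω)^2
      rw [← mul_add, mul_pow]
      rw [show ((2:ℝ≥0∞)⁻¹)^2 = 4⁻¹ by rw [← ENNReal.inv_pow]; norm_num]
      rw [← mul_assoc, ENNReal.mul_inv_cancel (by norm_num) (by norm_num), one_mul]
    have hXle : ∫⁻ ω, (Δ k ω)^2 ∂Q ≤ Iv^2 := by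
      calc ∫⁻ ω, (Δ k ω)^2 ∂Q ≤ ∫⁻ _, Iv^2 ∂Q :=
        lintegral_mono fun ω => pow_le_pow_left' (hΔle k ω) 2
      _ = Iv^2 := by simp
    have hXne : ∫⁻ ω, (Δ k ω)^2 ∂Q ≠ ⊤ := (hXle.trans_lt hI2top.lt_top).ne
    have hqa := hqtop _ (hgF k)
    have hqb := hqtop _ (hgF (k+1))
    have hqm := hqtop _ hmidF
    have hpar' : ∫⁻ ω, (Δ k ω)^2 ∂Q + 4 * q mid = 2 * q (g k) + 2 * q (g (k+1)) := by
      rw [← hmid4]; exact hpar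
    have hreal : (∫⁻ ω, (Δ k ω)^2 ∂Q).toReal + 4 * (q mid).toReal
        = 2 * (q (g k)).toReal + 2 * (q (g (k+1))).toReal := by
      have h := congrArg ENNReal.toReal hpar'
      rw [ENNReal.toReal_add hXne (ENNReal.mul_ne_top (by norm_num) hqm),
        ENNReal.toReal_add (ENNReal.mul_ne_top (by norm_num) hqa)
          (ENNReal.mul_ne_top (by norm_num) hqb),
        ENNReal.toReal_mul, ENNReal.toReal_mul, ENNReal.toReal_mul] at h
      norm_num at h
      convert h using 2 <;> norm_num
    -- real comparisons
    have hqaR : (q (g k)).toReal < d (n k) + (((n k):ℝ)+1)⁻¹ := hη3 (n k)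
    have hqbR : (q (g (k+1))).toReal < d (n (k+1)) + (((n (k+1)):ℝ)+1)⁻¹ := hη3 (n (k+1))
    have hdnk : L - e k ≤ d (n k) := le_trans (hNlt k).le (hdmono (hnN k))
    have hdnk1 : d (n (k+1)) ≤ L := hdL (n (k+1))
    have huk := hu k
    have huk1 := hu (k+1)
    have heq := heanti k
    have hfinal : (∫⁻ ω, (Δ k ω)^2 ∂Q).toReal ≤ 6 * e k := by linarith [hmidlb]
    calc ∫⁻ ω, (Δ k ω)^2 ∂Q
        = ENNReal.ofReal (∫⁻ ω, (Δ k ω)^2 ∂Q).toReal := (ENNReal.ofReal_toReal hXne).symm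
    _ ≤ ENNReal.ofReal (6 * e k) := ENNReal.ofReal_le_ofReal hfinal
  -- linear estimate via Cauchy-Schwarz
  have hΔ1 : ∀ k, ∫⁻ ω, Δ k ω ∂Q ≤ ENNReal.ofReal (Real.sqrt 6 * (1/4:ℝ)^k) := by
    intro k
    calc ∫⁻ ω, Δ k ω ∂Q ≤ (∫⁻ ω, (Δ k ω)^2 ∂Q) ^ ((1:ℝ)/2) := np_cs Q (hΔmeas k)
    _ ≤ (ENNReal.ofReal (6 * e k)) ^ ((1:ℝ)/2) := ENNReal.rpow_le_rpow (hΔ2 k) (by norm_num)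
    _ = ENNReal.ofReal ((6 * e k) ^ ((1:ℝ)/2)) :=
        ENNReal.ofReal_rpow_of_pos (by have := he0 k; linarith)
    _ = ENNReal.ofReal (Real.sqrt 6 * (1/4:ℝ)^k) := by
        congr 1
        rw [← Real.sqrt_eq_rpow, hedef]
        have h16 : (1/16:ℝ)^k = ((1/4:ℝ)^k)^2 := by
          rw [← pow_mul, mul_comm, pow_mul]
          norm_num
        rw [show (6:ℝ) * (fun k => (1/16:ℝ)^k) k = 6 * ((1/4:ℝ)^k)^2 by
          simp only []; rw [h16]]
        rw [Real.sqrt_mul (by norm_num), Real.sqrt_sq (by positivity)]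
  -- summability
  have hsummable : Summable (fun k => Real.sqrt 6 * (1/4:ℝ)^k) :=
    (summable_geometric_of_lt_one (by norm_num) (by norm_num)).mul_left _
  have hZ : ∑' k, ENNReal.ofReal (Real.sqrt 6 * (1/4:ℝ)^k) ≠ ⊤ := by
    rw [← ENNReal.ofReal_tsum_of_nonneg (fun k => by positivity) hsummable]
    exact ENNReal.ofReal_ne_top
  set T : Ω → ℝ≥0∞ := fun ω => ∑' k, Δ k ω with hTdef
  have hTmeas : Measurable T := Measurable.ennreal_tsum hΔmeas
  have hTint : ∫⁻ ω, T ω ∂Q ≠ ⊤ := by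
    have h1 : ∫⁻ ω, T ω ∂Q = ∑' k, ∫⁻ ω, Δ k ω ∂Q :=
      lintegral_tsum fun k => (hΔmeas k).aemeasurable
    rw [h1]
    exact ne_top_of_le_ne_top hZ (ENNReal.tsum_le_tsum hΔ1)
  have hae : ∀ᵐ ω ∂Q, T ω < ⊤ := ae_lt_top hTmeas hTint
  -- the optimal test
  set εs : Ω → ℝ≥0∞ := fun ω => liminf (fun k => g k ω) atTop with hεsdef
  have htend : ∀ᵐ ω ∂Q, Tendsto (fun k => g k ω) atTop (𝓝 (εs ω)) := by
    filter_upwards [hae] with ω hω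
    set r : ℕ → ℝ := fun k => (g k ω).toReal with hrdef
    have hΔω : ∀ k, (Δ k ω).toReal = dist (r k) (r (k+1)) := by
      intro k
      have hab : Δ k ω = (g k ω ⊔ g (k+1) ω) - (g k ω ⊓ g (k+1) ω) := by rw [hΔdef]
      rcases le_total (g k ω) (g (k+1) ω) with h | h
      · rw [hab, sup_eq_right.2 h, inf_eq_left.2 h,
          ENNReal.toReal_sub_of_le h (hgfin (k+1) ω), Real.dist_eq, abs_sub_comm,
          abs_of_nonneg (sub_nonneg.2 (ENNReal.toReal_mono (hgfin (k+1) ω) h))]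
      · rw [hab, sup_eq_left.2 h, inf_eq_right.2 h,
          ENNReal.toReal_sub_of_le h (hgfin k ω), Real.dist_eq,
          abs_of_nonneg (sub_nonneg.2 (ENNReal.toReal_mono (hgfin k ω) h))]
    have hTω : (∑' k, Δ k ω) ≠ ⊤ := hω.ne
    have hsum : Summable fun k => dist (r k) (r (k+1)) := by
      have h2 := ENNReal.summable_toReal hTω
      simpa only [hΔω] using h2
    obtain ⟨l, hl⟩ := cauchySeq_tendsto_of_complete (cauchySeq_of_summable_dist hsum)
    have h1 : ∀ k, g k ω = ENNReal.ofReal (r k) := fun k =>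
      (ENNReal.ofReal_toReal (hgfin k ω)).symm
    have hof : Tendsto (fun k => g k ω) atTop (𝓝 (ENNReal.ofReal l)) :=
      ((ENNReal.continuous_ofReal.tendsto l).comp hl).congr fun k => (h1 k).symm
    have hleq : εs ω = ENNReal.ofReal l := by rw [hεsdef]; exact hof.liminf_eq
    rw [hleq]; exact hof
  -- assemble
  refine ⟨εs, ?_, ?_, ?_, ?_⟩
  · rw [hεsdef]
    exact Measurable.liminf fun k => (hgF k).1
  · intro ω
    rw [hεsdef]
    calc liminf (fun k => g k ω) atTop ≤ liminf (fun _ => Iv) atTop :=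
      liminf_le_liminf (Eventually.of_forall fun k => (hgF k).2.1 ω)
    _ = Iv := liminf_const Iv
  · intro P hP
    calc ∫⁻ ω, εs ω ∂P ≤ liminf (fun k => ∫⁻ ω, g k ω ∂P) atTop := by
          rw [hεsdef]
          exact lintegral_liminf_le fun k => (hgF k).1
    _ ≤ liminf (fun _ => (1:ℝ≥0∞)) atTop :=
        liminf_le_liminf (Eventually.of_forall fun k => (hgF k).2.2 P hP)
    _ = 1 := liminf_const 1
  · intro ε hm hb hv
    have hFε : Feas ε := ⟨hm, hb, hv⟩
    have h1 := hle_D ε hFε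
    have hDCT : Tendsto (fun k => ∫⁻ ω, g k ω ∂Q) atTop (𝓝 (∫⁻ ω, εs ω ∂Q)) :=
      tendsto_lintegral_of_dominated_convergence (fun _ => Iv) (fun k => (hgF k).1)
        (fun k => Eventually.of_forall fun ω => (hgF k).2.1 ω)
        (by simpa using hItop) htend
    have hnsm' : StrictMono (fun k => n k + 1) := fun a b h => by
      simpa using hnsm h
    have hninf : Tendsto (fun k => c (n k)) atTop (𝓝 0) := by
      have h2 := ENNReal.tendsto_inv_nat_nhds_zero.comp hnsm'.tendsto_atTop
      refine h2.congr fun k => ?_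
      rw [hcdef]
      simp only [Function.comp_apply]
      push_cast
      ring_nf
    have h2 : Tendsto (fun k => D - c (n k)) atTop (𝓝 D) := by
      have h3 := ENNReal.Tendsto.sub (tendsto_const_nhds (x := D) (f := atTop)) hninf
        (Or.inl hDtop)
      simpa using h3
    have h3 : D ≤ ∫⁻ ω, εs ω ∂Q := le_of_tendsto_of_tendsto' h2 hDCT hgQ
    exact h1.trans h3
end

section
/- Let 0 < α ≤ 1, let H be a set of probability measures and Q a probability measure on Ω, and let E_α be the set of valid level-α continuous tests for H. For each h ∈ (0, 1), let ε_h ∈ E_α satisfy E_Q[(ε_h)^h] ≥ E_Q[ε^h] for every ε ∈ E_α (i.e., ε_h is h-generalized-mean optimal at level α). Suppose the pointwise limit L(ω) = lim_{h→1⁻} ε_h(ω) exists for every ω ∈ Ω. Then E_Q[L] ≥ E_Q[ε] for every ε ∈ E_α; that is, the limit is an optimizer of the traditional (h = 1) power target. -/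
open MeasureTheory ENNReal NNReal Set

lemma aux_le_rpow {M x : ℝ≥0∞} (hx : x ≤ M) (hMne : M ≠ ∞) {h : ℝ}
    (hh : h ∈ Set.Ioo (0:ℝ) 1) : x ≤ M ^ (1 - h) * x ^ h := by
  rcases eq_or_ne x 0 with rfl | hx0
  · simp [ENNReal.zero_rpow_of_pos hh.1]
  · have hxne : x ≠ ∞ := (lt_of_le_of_lt hx hMne.lt_top).ne
    calc x = x ^ ((1 - h) + h) := by rw [sub_add_cancel, ENNReal.rpow_one]
    _ = x ^ (1 - h) * x ^ h := ENNReal.rpow_add _ _ hx0 hxne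
    _ ≤ M ^ (1 - h) * x ^ h :=
        mul_le_mul_left (ENNReal.rpow_le_rpow hx (by linarith [hh.2])) _

lemma aux_young {x : ℝ≥0∞} (hx : x ≠ ∞) {h : ℝ} (hh : h ∈ Set.Ioo (0:ℝ) 1) :
    x ^ h ≤ ENNReal.ofReal h * x + ENNReal.ofReal (1 - h) := by
  lift x to ℝ≥0 using hx
  have hw : Real.toNNReal h + Real.toNNReal (1 - h) = 1 := by
    rw [← Real.toNNReal_add hh.1.le (by linarith [hh.2])]
    norm_num
  have key := NNReal.geom_mean_le_arith_mean2_weighted _ _ x 1 hw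
  rw [NNReal.one_rpow, mul_one, mul_one] at key
  rw [Real.coe_toNNReal h hh.1.le] at key
  calc (x : ℝ≥0∞) ^ h = ((x ^ h : ℝ≥0) : ℝ≥0∞) := by
        rw [ENNReal.coe_rpow_of_nonneg _ hh.1.le]
  _ ≤ ((Real.toNNReal h * x + Real.toNNReal (1 - h) : ℝ≥0) : ℝ≥0∞) :=
        ENNReal.coe_le_coe.mpr key
  _ = ENNReal.ofReal h * x + ENNReal.ofReal (1 - h) := by
        push_cast
        rfl

/-- The pointwise limit as `h → 1⁻` of `h`-generalized-mean optimal level-`α`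
continuous tests is an optimizer of the traditional (`h = 1`) power target: if
for each `h ∈ (0,1)` the test `ε_h` is a valid level-`α` continuous test for `H`
maximizing `E_Q[ε^h]` over valid level-`α` continuous tests, and
`L(ω) = lim_{h→1⁻} ε_h(ω)` exists pointwise, then `E_Q[L] ≥ E_Q[ε]` for every
valid level-`α` continuous test `ε`. -/
theorem limit_of_generalized_mean_optimal_is_NP_optimal
    {Ω : Type*} [MeasurableSpace Ω]
    (H : Set (Measure Ω)) (hH : ∀ P ∈ H, IsProbabilityMeasure P)
    (Q : Measure Ω) [IsProbabilityMeasure Q]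
    (α : ℝ≥0∞) (hα0 : 0 < α) (hα1 : α ≤ 1)
    (ε : ℝ → Ω → ℝ≥0∞)
    (hmeas : ∀ h ∈ Ioo (0 : ℝ) 1, Measurable (ε h))
    (hbdd : ∀ h ∈ Ioo (0 : ℝ) 1, ∀ ω, ε h ω ≤ α⁻¹)
    (hvalid : ∀ h ∈ Ioo (0 : ℝ) 1, ∀ P ∈ H, ∫⁻ ω, ε h ω ∂P ≤ 1)
    (hopt : ∀ h ∈ Ioo (0 : ℝ) 1, ∀ ε' : Ω → ℝ≥0∞, Measurable ε' →
      (∀ ω, ε' ω ≤ α⁻¹) → (∀ P ∈ H, ∫⁻ ω, ε' ω ∂P ≤ 1) →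
      ∫⁻ ω, ε' ω ^ h ∂Q ≤ ∫⁻ ω, ε h ω ^ h ∂Q)
    (L : Ω → ℝ≥0∞)
    (hL : ∀ ω, Filter.Tendsto (fun h => ε h ω)
      (nhdsWithin 1 (Ioo (0 : ℝ) 1)) (nhds (L ω))) :
    ∀ ε' : Ω → ℝ≥0∞, Measurable ε' → (∀ ω, ε' ω ≤ α⁻¹) →
      (∀ P ∈ H, ∫⁻ ω, ε' ω ∂P ≤ 1) →
      ∫⁻ ω, ε' ω ∂Q ≤ ∫⁻ ω, L ω ∂Q := by
  intro ε' hε'meas hε'bdd hε'valid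
  set M : ℝ≥0∞ := α⁻¹ with hMdef
  have hMne : M ≠ ∞ := by
    simp [hMdef, ENNReal.inv_ne_top, hα0.ne']
  have hM0 : M ≠ 0 := by
    simp [hMdef, ENNReal.inv_ne_zero]
    exact (lt_of_le_of_lt hα1 ENNReal.one_lt_top).ne
  -- the sequence h_n = 1 - 1/(n+2)
  set s : ℕ → ℝ := fun n => 1 - ((n : ℝ) + 2)⁻¹ with hsdef
  have hpos : ∀ n : ℕ, (0 : ℝ) < ((n : ℝ) + 2)⁻¹ := fun n => by positivity
  have hs_mem : ∀ n, s n ∈ Ioo (0 : ℝ) 1 := by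
    intro n
    constructor
    · have h2 : ((n : ℝ) + 2)⁻¹ < 1 := by
        rw [inv_lt_one_iff₀]
        right
        have : (0:ℝ) ≤ (n:ℝ) := Nat.cast_nonneg n
        linarith
      simp only [hsdef]
      linarith
    · simp only [hsdef]
      linarith [hpos n]
  have hinv_tendsto : Filter.Tendsto (fun n : ℕ => ((n : ℝ) + 2)⁻¹)
      Filter.atTop (nhds 0) := by
    apply tendsto_inv_atTop_zero.comp
    exact Filter.tendsto_atTop_add_const_right _ 2 tendsto_natCast_atTop_atTop
  have hs_tendsto : Filter.Tendsto s Filter.atTop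
      (nhdsWithin 1 (Ioo (0 : ℝ) 1)) := by
    apply tendsto_nhdsWithin_of_tendsto_nhds_of_eventually_within
    · have := Filter.Tendsto.const_sub (1 : ℝ) hinv_tendsto
      simpa using this
    · exact Filter.Eventually.of_forall hs_mem
  -- pointwise limit along the sequence
  have hptlim : ∀ ω, Filter.Tendsto (fun n => ε (s n) ω) Filter.atTop (nhds (L ω)) :=
    fun ω => (hL ω).comp hs_tendsto
  have hLbdd : ∀ ω, L ω ≤ M := fun ω =>
    le_of_tendsto (hptlim ω)
      (Filter.Eventually.of_forall fun n => hbdd _ (hs_mem n) ω)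
  -- integral of the constant M
  have hconst : ∫⁻ _, M ∂Q = M := by
    rw [lintegral_const, measure_univ, mul_one]
  -- dominated convergence
  have hT2 : Filter.Tendsto (fun n => ∫⁻ ω, ε (s n) ω ∂Q) Filter.atTop
      (nhds (∫⁻ ω, L ω ∂Q)) := by
    apply tendsto_lintegral_of_dominated_convergence (fun _ => M)
      (fun n => hmeas _ (hs_mem n))
      (fun n => Filter.Eventually.of_forall fun ω => hbdd _ (hs_mem n) ω)
      (by rw [hconst]; exact hMne)
    exact Filter.Eventually.of_forall hptlim
  -- the chain of inequalities
  have hchain : ∀ n, ∫⁻ ω, ε' ω ∂Q ≤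
      M ^ (1 - s n) * (∫⁻ ω, ε (s n) ω ∂Q + ENNReal.ofReal (1 - s n)) := by
    intro n
    have hmem := hs_mem n
    calc ∫⁻ ω, ε' ω ∂Q ≤ ∫⁻ ω, M ^ (1 - s n) * ε' ω ^ (s n) ∂Q :=
          lintegral_mono fun ω => aux_le_rpow (hε'bdd ω) hMne hmem
    _ = M ^ (1 - s n) * ∫⁻ ω, ε' ω ^ (s n) ∂Q :=
          lintegral_const_mul _ (hε'meas.pow_const _)
    _ ≤ M ^ (1 - s n) * ∫⁻ ω, ε (s n) ω ^ (s n) ∂Q :=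
          mul_le_mul_right (hopt _ hmem ε' hε'meas hε'bdd hε'valid) _
    _ ≤ M ^ (1 - s n) * ∫⁻ ω, (ENNReal.ofReal (s n) * ε (s n) ω
          + ENNReal.ofReal (1 - s n)) ∂Q := by
          apply mul_le_mul_right
          apply lintegral_mono fun ω => aux_young ?_ hmem
          exact (lt_of_le_of_lt (hbdd _ hmem ω) hMne.lt_top).ne
    _ = M ^ (1 - s n) * (ENNReal.ofReal (s n) * ∫⁻ ω, ε (s n) ω ∂Q
          + ENNReal.ofReal (1 - s n)) := by
          rw [lintegral_add_right _ measurable_const,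
            lintegral_const_mul _ (hmeas _ hmem), lintegral_const, measure_univ,
            mul_one]
    _ ≤ M ^ (1 - s n) * (∫⁻ ω, ε (s n) ω ∂Q + ENNReal.ofReal (1 - s n)) := by
          apply mul_le_mul_right
          apply add_le_add_left
          apply mul_le_of_le_one_left (zero_le (a := _))
          exact ENNReal.ofReal_le_one.mpr hmem.2.le
  -- the limit of the right-hand side
  have hT1 : Filter.Tendsto (fun n => M ^ (1 - s n)) Filter.atTop (nhds 1) := by
    have hMt : (0 : ℝ) < M.toReal := ENNReal.toReal_pos hM0 hMne
    have heq : ∀ n, M ^ (1 - s n) = ENNReal.ofReal (M.toReal ^ (1 - s n)) := by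
      intro n
      rw [← ENNReal.ofReal_rpow_of_pos hMt, ENNReal.ofReal_toReal hMne]
    simp only [heq]
    have : Filter.Tendsto (fun n => M.toReal ^ (1 - s n)) Filter.atTop (nhds 1) := by
      have h1s : Filter.Tendsto (fun n => 1 - s n) Filter.atTop (nhds 0) := by
        simpa [hsdef] using hinv_tendsto
      have hc : Continuous (fun y : ℝ => M.toReal ^ y) := by
        simp only [Real.rpow_def_of_pos hMt]
        exact Real.continuous_exp.comp (continuous_const.mul continuous_id)
      have := (hc.tendsto 0).comp h1s
      simpa [Real.rpow_zero, Function.comp_def] using this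
    have := (ENNReal.continuous_ofReal.tendsto 1).comp this
    simpa [Function.comp_def] using this
  have hT3 : Filter.Tendsto (fun n => ENNReal.ofReal (1 - s n)) Filter.atTop
      (nhds 0) := by
    have h1s : Filter.Tendsto (fun n => 1 - s n) Filter.atTop (nhds 0) := by
      simpa [hsdef] using hinv_tendsto
    have := (ENNReal.continuous_ofReal.tendsto 0).comp h1s
    simpa [Function.comp_def] using this
  have hLint_ne : ∫⁻ ω, L ω ∂Q ≠ ∞ := by
    refine ne_top_of_le_ne_top hMne ?_
    calc ∫⁻ ω, L ω ∂Q ≤ ∫⁻ _, M ∂Q := lintegral_mono hLbdd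
    _ = M := hconst
  have hTmul : Filter.Tendsto
      (fun n => M ^ (1 - s n) * (∫⁻ ω, ε (s n) ω ∂Q + ENNReal.ofReal (1 - s n)))
      Filter.atTop (nhds (1 * (∫⁻ ω, L ω ∂Q + 0))) := by
    exact ENNReal.Tendsto.mul hT1 (Or.inl one_ne_zero) (hT2.add hT3)
      (Or.inr ENNReal.one_ne_top)
  rw [one_mul, add_zero] at hTmul
  exact ge_of_tendsto' hTmul hchain
end

section
/- Let P, Q be probability measures on Ω with densities p, q with respect to H̄ = (P + Q)/2, let α > 0, let U be a utility function on [0, 1/α], and let Ω₊ = {ω : p(ω) > 0 and q(ω) > 0}. Define M(λ) = ∫_{Ω₊} p(ω)·min((U')⁻¹(λ·p(ω)/q(ω)), 1/α) dH̄(ω) for λ ≥ 0. If there exists some λ ≥ 0 with M(λ) ≤ 1, then there exists λ* ≥ 0 with M(λ*) ≤ 1 such that either λ* = 0 or M(λ*) = 1. Moreover, λ* = 0 suffices if and only if α ≥ P(Ω₊). -/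
open MeasureTheory ENNReal NNReal Set

open Filter Topology

/-- Existence of the multiplier `λ*` (Lemma `lem:existence_lambda`): with
`M(λ) = ∫_{Ω₊} p·min((U')⁻¹(λ·p/q), 1/α) dH̄` over
`Ω₊ = {p > 0 and q > 0}`, if `M(λ) ≤ 1` for some `λ ≥ 0` then there is
`λ* ≥ 0` with `M(λ*) ≤ 1` and either `λ* = 0` or `M(λ*) = 1`; moreover
`λ* = 0` suffices (i.e. `M(0) ≤ 1`) if and only if `α ≥ P(Ω₊)`. -/
theorem exists_lambda_star
    {Ω : Type*} [MeasurableSpace Ω]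
    (P Q : Measure Ω) [IsProbabilityMeasure P] [IsProbabilityMeasure Q]
    (p q : Ω → ℝ≥0∞) (hp : Measurable p) (hq : Measurable q)
    (hPd : P = ((2 : ℝ≥0∞)⁻¹ • (P + Q)).withDensity p)
    (hQd : Q = ((2 : ℝ≥0∞)⁻¹ • (P + Q)).withDensity q)
    (α : ℝ≥0∞) (hα : 0 < α)
    (U D Dinv : ℝ≥0∞ → ℝ≥0∞) (hU : IsUtility α U D)
    (hDinv_anti : Antitone Dinv) (hDinv_zero : Dinv 0 = ∞) (hDinv_top : Dinv ∞ = 0)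
    (hDinv_inv : ∀ x ∈ Icc (0 : ℝ≥0∞) α⁻¹, 0 < D x → D x ≠ ∞ → Dinv (D x) = x)
    (M : ℝ≥0 → ℝ≥0∞)
    (hM : ∀ lam : ℝ≥0, M lam =
      ∫⁻ ω in {ω | 0 < p ω ∧ 0 < q ω},
        p ω * min (Dinv ((lam : ℝ≥0∞) * (p ω / q ω))) α⁻¹
          ∂((2 : ℝ≥0∞)⁻¹ • (P + Q)))
    (hex : ∃ lam : ℝ≥0, M lam ≤ 1) :
    (∃ lam : ℝ≥0, M lam ≤ 1 ∧ (lam = 0 ∨ M lam = 1)) ∧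
      (M 0 ≤ 1 ↔ P {ω | 0 < p ω ∧ 0 < q ω} ≤ α) := by
  classical
  set H : Measure Ω := (2 : ℝ≥0∞)⁻¹ • (P + Q) with hH
  set S : Set Ω := {ω | 0 < p ω ∧ 0 < q ω} with hS
  have hSmeas : MeasurableSet S :=
    (hp measurableSet_Ioi).inter (hq measurableSet_Ioi)
  have hαinv_ne : α⁻¹ ≠ ∞ := ENNReal.inv_ne_top.2 hα.ne'
  -- P S expressed as an integral
  have hPS : P S = ∫⁻ ω in S, p ω ∂H := by
    conv_lhs => rw [hPd]
    rw [withDensity_apply _ hSmeas]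
  have hPuniv : (1 : ℝ≥0∞) = ∫⁻ ω, p ω ∂H := by
    have : P univ = ∫⁻ ω, p ω ∂H := by
      conv_lhs => rw [hPd]
      rw [withDensity_apply _ MeasurableSet.univ, Measure.restrict_univ]
    rw [← this, measure_univ]
  have hp_ae_fin : ∀ᵐ ω ∂H, p ω < ∞ := ae_lt_top hp (by rw [← hPuniv]; exact one_ne_top)
  -- continuity of the clipped inverse
  have hgc : Continuous (fun y : ℝ≥0∞ => min (Dinv y) α⁻¹) := by
    rw [continuous_iff_continuousAt]
    intro t
    rw [ContinuousAt, tendsto_order]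
    constructor
    · intro a ha
      obtain ⟨x, hax, hxg⟩ := exists_between ha
      have hx0 : 0 < x := lt_of_le_of_lt zero_le hax
      have hxα : x < α⁻¹ := lt_of_lt_of_le hxg (min_le_right _ _)
      have hxmem : x ∈ Icc (0 : ℝ≥0∞) α⁻¹ := ⟨zero_le, hxα.le⟩
      have hDpos : 0 < D x :=
        lt_of_le_of_lt (zero_le) (hU.deriv_strictAntiOn hxmem ⟨zero_le, le_rfl⟩ hxα)
      have hDfin : D x ≠ ∞ := hU.deriv_finite x hx0 hxα
      have hinv : Dinv (D x) = x := hDinv_inv x hxmem hDpos hDfin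
      have htD : t < D x := by
        by_contra h
        push_neg at h
        have hle : Dinv t ≤ x := hinv ▸ hDinv_anti h
        exact absurd (lt_of_lt_of_le hxg (min_le_left _ _)) (not_lt.2 hle)
      filter_upwards [Iio_mem_nhds htD] with y hy
      have hxy : x ≤ Dinv y := hinv ▸ hDinv_anti (le_of_lt hy)
      exact lt_of_lt_of_le hax (le_min hxy hxα.le)
    · intro b hb
      rcases lt_or_ge α⁻¹ b with hbα | hbα
      · exact Filter.Eventually.of_forall fun y => lt_of_le_of_lt (min_le_right _ _) hbα
      · obtain ⟨x, hgx, hxb⟩ := exists_between hb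
        have hx0 : 0 < x := lt_of_le_of_lt (zero_le) hgx
        have hxα : x < α⁻¹ := lt_of_lt_of_le hxb hbα
        have hxmem : x ∈ Icc (0 : ℝ≥0∞) α⁻¹ := ⟨zero_le, hxα.le⟩
        have hDpos : 0 < D x :=
          lt_of_le_of_lt (zero_le) (hU.deriv_strictAntiOn hxmem ⟨zero_le, le_rfl⟩ hxα)
        have hDfin : D x ≠ ∞ := hU.deriv_finite x hx0 hxα
        have hinv : Dinv (D x) = x := hDinv_inv x hxmem hDpos hDfin
        have htD : D x < t := by
          by_contra h
          push_neg at h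
          have hx' : x ≤ Dinv t := hinv ▸ hDinv_anti h
          exact absurd hgx (not_lt.2 (le_min hx' hxα.le))
        filter_upwards [Ioi_mem_nhds htD] with y hy
        have hxy : Dinv y ≤ x := hinv ▸ hDinv_anti (le_of_lt hy)
        exact lt_of_le_of_lt (le_trans (min_le_left _ _) hxy) hxb
  -- continuity of M
  have hMcont : Continuous M := by
    have hM' : M = fun lam : ℝ≥0 =>
        ∫⁻ ω in S, p ω * min (Dinv ((lam : ℝ≥0∞) * (p ω / q ω))) α⁻¹ ∂H := funext hM
    rw [continuous_iff_continuousAt]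
    intro c
    rw [hM', ContinuousAt]
    refine tendsto_lintegral_filter_of_dominated_convergence (fun ω => p ω * α⁻¹)
      ?_ ?_ ?_ ?_
    · exact Filter.Eventually.of_forall fun lam =>
        hp.mul (hgc.measurable.comp (measurable_const.mul (hp.div hq)))
    · exact Filter.Eventually.of_forall fun lam =>
        Filter.Eventually.of_forall fun ω => mul_le_mul_right (min_le_right _ _) _
    · rw [lintegral_mul_const _ hp, ← hPS]
      exact ENNReal.mul_ne_top (measure_ne_top P S) hαinv_ne
    · have hpae : ∀ᵐ ω ∂(H.restrict S), p ω < ∞ := ae_restrict_of_ae hp_ae_fin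
      have hmem : ∀ᵐ ω ∂(H.restrict S), ω ∈ S := ae_restrict_mem hSmeas
      filter_upwards [hpae, hmem] with ω hpω hωS
      have hr_fin : p ω / q ω ≠ ∞ := (ENNReal.div_lt_top hpω.ne hωS.2.ne').ne
      have t1 : Filter.Tendsto (fun lam : ℝ≥0 => (lam : ℝ≥0∞) * (p ω / q ω)) (𝓝 c)
          (𝓝 ((c : ℝ≥0∞) * (p ω / q ω))) :=
        ENNReal.Tendsto.mul_const (ENNReal.tendsto_coe.2 tendsto_id) (Or.inr hr_fin)
      have t2 := (hgc.tendsto _).comp t1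
      exact ENNReal.Tendsto.const_mul t2 (Or.inr hpω.ne)
  -- value at 0
  have hM0 : M 0 = P S * α⁻¹ := by
    rw [hM 0]
    have heq : ∀ ω, p ω * min (Dinv (((0 : ℝ≥0) : ℝ≥0∞) * (p ω / q ω))) α⁻¹ = p ω * α⁻¹ := by
      intro ω
      rw [ENNReal.coe_zero, zero_mul, hDinv_zero, min_eq_right le_top]
    simp only [heq]
    rw [lintegral_mul_const _ hp, ← hPS]
  constructor
  · rcases le_or_gt (M 0) 1 with h0 | h0
    · exact ⟨0, h0, Or.inl rfl⟩
    · obtain ⟨lam0, hlam0⟩ := hex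
      have hsub := intermediate_value_Icc' (show (0:ℝ≥0) ≤ lam0 from zero_le) hMcont.continuousOn
      obtain ⟨lam, _, hlam⟩ := hsub (show (1 : ℝ≥0∞) ∈ Icc (M lam0) (M 0) from ⟨hlam0, h0.le⟩)
      exact ⟨lam, hlam.le, Or.inr hlam⟩
  · rw [hM0]
    rcases eq_or_ne α ∞ with rfl | hαtop
    · simp
    · rw [← div_eq_mul_inv, ENNReal.div_le_iff hα.ne' hαtop, one_mul]
end
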